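/- Let g be a Lie algebra, σ a 2-cocycle on g, and g⁺, σ⁺ the associated double Lie algebra and cocycle. Let U_{Lie,σ⁺}(g⁺) = T(g⁺)/I_σ, where I_σ is the two-sided ideal generated by x⁺⊗y⁺ − y⁺⊗x⁺ − [x⁺,y⁺]⁺ − σ⁺(x⁺,y⁺)·1 (the Sridharan algebra). Define α' : Sym_σ(g) → U_{Lie,σ⁺}(g⁺) as the algebra morphism extending x ↦ ι(x⁰), and β' as the unique α'-derivation extending x ↦ ι(x¹). Then (U_{Lie,σ⁺}(g⁺), α', β') is a Poisson enveloping algebra of the modified Lie-Poisson algebra (Sym(g), {·,·}_σ). -/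

import Mathlib

set_option maxHeartbeats 1600000


/-- Poisson enveloping algebra predicate (bracket given as a plain binary map). -/
structure IsPoissonEnveloping (R : Type*) {A U : Type*} [CommRing R] [CommRing A]
    [Algebra R A] [Ring U] [Algebra R U] (P : A → A → A)
    (α : A →ₐ[R] U) (β : A →ₗ[R] U) : Prop where
  map_lie : ∀ a b : A, β (P a b) = β a * β b - β b * β a
  compat₃ : ∀ a b : A, α (P a b) = α a * β b - β b * α a
  compat₄ : ∀ a b : A, β (a * b) = α a * β b + α b * β a
  universal : ∀ (U' : Type*) [Ring U'] [Algebra R U']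
      (α' : A →ₐ[R] U') (β' : A →ₗ[R] U'),
      (∀ a b : A, β' (P a b) = β' a * β' b - β' b * β' a) →
      (∀ a b : A, α' (P a b) = α' a * β' b - β' b * α' a) →
      (∀ a b : A, β' (a * b) = α' a * β' b + α' b * β' a) →
      ∃! γ : U →ₐ[R] U', (∀ a : A, γ (α a) = α' a) ∧ (∀ a : A, γ (β a) = β' a)

section Sridharan

variable (R : Type u) (g : Type u) [CommRing R] [LieRing g] [LieAlgebra R g]

/-- The bracket of the double `g⁺ = g⁰ ⊕ g`: writing `x⁺ = (y, z) = y⁰ + z¹`,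
`[x₁⁺, x₂⁺]⁺ = [y₁,z₂]⁰ + [z₁,y₂]⁰ + [z₁,z₂]¹`. -/
def doubleBracket (x₁ x₂ : g × g) : g × g :=
  (⁅x₁.1, x₂.2⁆ + ⁅x₁.2, x₂.1⁆, ⁅x₁.2, x₂.2⁆)

/-- The cocycle `σ⁺` of `g⁺`: `σ⁺(x⁰,y⁰) = σ⁺(x¹,y¹) = 0`,
`σ⁺(x⁰,y¹) = σ⁺(x¹,y⁰) = σ(x,y)`. -/
def doubleCocycle (σ : g →ₗ[R] g →ₗ[R] R) (x₁ x₂ : g × g) : R :=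
  σ x₁.1 x₂.2 + σ x₁.2 x₂.1

/-- The relation defining the Sridharan algebra `U_{Lie,σ⁺}(g⁺) = T(g⁺)/I_σ`, where
`I_σ` is the two-sided ideal generated by all
`x⁺⊗y⁺ − y⁺⊗x⁺ − [x⁺,y⁺]⁺ − σ⁺(x⁺,y⁺)·1`. -/
inductive SridharanRel (σ : g →ₗ[R] g →ₗ[R] R) :
    TensorAlgebra R (g × g) → TensorAlgebra R (g × g) → Prop
  | of (x y : g × g) : SridharanRel σ
      (TensorAlgebra.ι R x * TensorAlgebra.ι R y - TensorAlgebra.ι R y * TensorAlgebra.ι R x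
        - TensorAlgebra.ι R (doubleBracket g x y))
      (algebraMap R (TensorAlgebra R (g × g)) (doubleCocycle R g σ x y))

/-- The Sridharan algebra (modified Lie enveloping algebra) `U_{Lie,σ⁺}(g⁺)`. -/
abbrev Sridharan (σ : g →ₗ[R] g →ₗ[R] R) := RingQuot (SridharanRel R g σ)

/-- The canonical map `ι : g⁺ → U_{Lie,σ⁺}(g⁺)`. -/
noncomputable def sridharanι (σ : g →ₗ[R] g →ₗ[R] R) : g × g →ₗ[R] Sridharan R g σ :=
  (RingQuot.mkAlgHom R (SridharanRel R g σ)).toLinearMap ∘ₗ TensorAlgebra.ι R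

end Sridharan


section AuxRing

variable {U : Type*} [Ring U]

private lemma aux_add_left (x y z : U) :
    (x * z - z * x) + (y * z - z * y) = (x + y) * z - z * (x + y) := by noncomm_ring

private lemma aux_add_right (A u v : U) :
    (A * u - u * A) + (A * v - v * A) = A * (u + v) - (u + v) * A := by noncomm_ring

private lemma aux_c3x_mul (A cs ct ds dt : U) (h1 : A * cs = cs * A) (h2 : A * ct = ct * A) :
    cs * (A * dt - dt * A) + ct * (A * ds - ds * A)
      = A * (cs * dt + ct * ds) - (cs * dt + ct * ds) * A := by
  rw [show A * (cs * dt + ct * ds) = (A * cs) * dt + (A * ct) * ds by noncomm_ring, h1, h2]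
  noncomm_ring

private lemma aux_c3_mul (cs ct d : U)
    (h2 : ct * (cs * d - d * cs) = (cs * d - d * cs) * ct) :
    cs * (ct * d - d * ct) + ct * (cs * d - d * cs) = cs * ct * d - d * (cs * ct) := by
  rw [h2]; noncomm_ring

private lemma aux_flip (p q r : U) (h : -p = q - r) : r = q + p := by
  have h2 : q - r = -p := h.symm
  rw [sub_eq_iff_eq_add] at h2
  rw [h2]; abel

private lemma aux_mlx_mul (A Bx cs ct ds dt : U)
    (hcs : Bx * cs = cs * Bx + (A * ds - ds * A))
    (hct : Bx * ct = ct * Bx + (A * dt - dt * A)) :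
    (cs * (Bx * dt - dt * Bx) + (A * dt - dt * A) * ds)
        + (ct * (Bx * ds - ds * Bx) + (A * ds - ds * A) * dt)
      = Bx * (cs * dt + ct * ds) - (cs * dt + ct * ds) * Bx := by
  rw [show Bx * (cs * dt + ct * ds) = (Bx * cs) * dt + (Bx * ct) * ds by noncomm_ring,
    hcs, hct]
  noncomm_ring

private lemma aux_ml_mul (cs ct bs bt d : U) :
    (cs * (bt * d - d * bt) + (ct * d - d * ct) * bs)
        + (ct * (bs * d - d * bs) + (cs * d - d * cs) * bt)
      = (cs * bt + ct * bs) * d - d * (cs * bt + ct * bs) := by noncomm_ring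

private lemma aux_alg_case (A b0 : U) : (0 : U) = A * 0 - 0 * A := by noncomm_ring

end AuxRing

/-- Let `g` be a Lie algebra over `R`, `σ` a 2-cocycle on `g`, and
`g⁺, σ⁺` the associated double Lie algebra and cocycle. Let `S` be the symmetric
algebra of `g` (axiomatized by its universal property, structure map `ι`), equipped
with the modified Lie-Poisson bracket `P` extending `{x,y}_σ = [x,y] + σ(x,y)`.
Let `α'` be the algebra morphism `S → U_{Lie,σ⁺}(g⁺)` extending `x ↦ ι(x⁰)` and `β'`
the unique `α'`-derivation extending `x ↦ ι(x¹)`. Then `(U_{Lie,σ⁺}(g⁺), α', β')` is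
a Poisson enveloping algebra of the modified Lie-Poisson algebra `(S, P)`. -/
theorem sridharan_is_poisson_enveloping
    {R g S : Type u} [CommRing R] [LieRing g] [LieAlgebra R g]
    [CommRing S] [Algebra R S] (ι : g →ₗ[R] S)
    (hS : ∀ (B : Type u) [CommRing B] [Algebra R B] (f : g →ₗ[R] B),
      ∃! h : S →ₐ[R] B, ∀ x : g, h (ι x) = f x)
    (σ : g →ₗ[R] g →ₗ[R] R)
    (hσskew : ∀ x y : g, σ x y = - σ y x)
    (hσcocycle : ∀ x y z : g, σ ⁅x, y⁆ z + σ ⁅y, z⁆ x + σ ⁅z, x⁆ y = 0)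
    -- the modified Lie-Poisson bracket on `S`:
    (P : S →ₗ[R] S →ₗ[R] S)
    (hder₁ : ∀ a b c : S, P (a * b) c = a * P b c + b * P a c)
    (hder₂ : ∀ a b c : S, P a (b * c) = b * P a c + c * P a b)
    (hgen : ∀ x y : g, P (ι x) (ι y) = ι ⁅x, y⁆ + algebraMap R S (σ x y))
    (hPskew : ∀ a : S, P a a = 0)
    (hPJac : ∀ a b c : S, P a (P b c) + P b (P c a) + P c (P a b) = 0)
    -- `α'` is the algebra morphism extending `x ↦ ι(x⁰)`:
    (α' : S →ₐ[R] Sridharan R g σ)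
    (hα' : ∀ x : g, α' (ι x) = sridharanι R g σ (x, 0))
    -- `β'` is the `α'`-derivation extending `x ↦ ι(x¹)`:
    (β' : S →ₗ[R] Sridharan R g σ)
    (hβ'der : ∀ a b : S, β' (a * b) = α' a * β' b + α' b * β' a)
    (hβ' : ∀ x : g, β' (ι x) = sridharanι R g σ (0, x)) :
    IsPoissonEnveloping R (fun a b => P a b) α' β' := by
  classical
  -- basic facts about P
  have hP1 : ∀ b : S, P 1 b = 0 := by
    intro b
    have h := hder₁ 1 1 b
    simp only [one_mul] at h
    exact (right_eq_add.mp h)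
  have hPalg₁ : ∀ (r : R) (b : S), P (algebraMap R S r) b = 0 := by
    intro r b
    rw [Algebra.algebraMap_eq_smul_one, map_smul]
    simp [hP1]
  have hPskew' : ∀ a b : S, P a b = - P b a := by
    intro a b
    have h := hPskew (a + b)
    simp only [map_add, LinearMap.add_apply, hPskew a, hPskew b, zero_add, add_zero] at h
    exact eq_neg_of_add_eq_zero_right h
  have hPalg₂ : ∀ (a : S) (r : R), P a (algebraMap R S r) = 0 := by
    intro a r
    rw [hPskew', hPalg₁, neg_zero]
  -- basic facts about β'
  have hβ'1 : β' 1 = 0 := by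
    have h := hβ'der 1 1
    simp only [one_mul, map_one] at h
    exact (right_eq_add.mp h)
  have hβ'alg : ∀ r : R, β' (algebraMap R S r) = 0 := by
    intro r
    rw [Algebra.algebraMap_eq_smul_one, map_smul, hβ'1, smul_zero]
  -- α' commutes with itself
  have hcommα : ∀ s t : S, α' s * α' t = α' t * α' s := by
    intro s t; rw [← map_mul, ← map_mul, mul_comm]
  -- S is generated by ι
  have hgenS : ∀ s : S, s ∈ Algebra.adjoin R (Set.range ι) := by
    intro s
    set A := Algebra.adjoin R (Set.range ι) with hA
    let j : g →ₗ[R] A := LinearMap.codRestrict (Subalgebra.toSubmodule A) ι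
      (fun x => Algebra.subset_adjoin ⟨x, rfl⟩)
    obtain ⟨h, hh, -⟩ := hS A j
    obtain ⟨h', -, hu'⟩ := hS S ι
    have e : A.val.comp h = AlgHom.id R S := by
      rw [hu' (A.val.comp h) (fun x => by rw [AlgHom.comp_apply, hh]; rfl),
        hu' (AlgHom.id R S) (fun x => rfl)]
    have es : A.val (h s) = s := DFunLike.congr_fun e s
    rw [← es]; exact (h s).2
  -- the commutation relation in the Sridharan algebra
  have hsc : ∀ x y : g × g,
      sridharanι R g σ x * sridharanι R g σ y - sridharanι R g σ y * sridharanι R g σ x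
        = sridharanι R g σ (doubleBracket g x y)
          + algebraMap R (Sridharan R g σ) (doubleCocycle R g σ x y) := by
    intro x y
    have h := RingQuot.mkAlgHom_rel R (SridharanRel.of (σ := σ) x y)
    simp only [map_sub, map_mul, AlgHom.commutes] at h
    have hι : ∀ v : g × g, sridharanι R g σ v
        = RingQuot.mkAlgHom R (SridharanRel R g σ) (TensorAlgebra.ι R v) := fun v => rfl
    rw [hι, hι, hι]
    rw [sub_sub, sub_eq_iff_eq_add] at h
    rw [h]; abel
  -- base cases
  have hb3 : ∀ x y : g, α' (P (ι x) (ι y))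
      = α' (ι x) * β' (ι y) - β' (ι y) * α' (ι x) := by
    intro x y
    rw [hgen, map_add, hα' x, hβ' y, AlgHom.commutes]
    have h := hsc (x, 0) (0, y)
    simp only [doubleBracket, doubleCocycle, lie_zero, zero_lie, add_zero, zero_add,
      map_zero] at h
    rw [h, hα']
  have hbl : ∀ x y : g, β' (P (ι x) (ι y))
      = β' (ι x) * β' (ι y) - β' (ι y) * β' (ι x) := by
    intro x y
    rw [hgen, map_add, hβ'alg, add_zero, hβ' x, hβ' y]
    have h := hsc (0, x) (0, y)
    simp only [doubleBracket, doubleCocycle, lie_zero, zero_lie, add_zero, zero_add,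
      map_zero, LinearMap.zero_apply] at h
    rw [h, hβ']
  -- compat₃ for a generator on the left
  have C3x : ∀ (x : g) (b : S), α' (P (ι x) b) = α' (ι x) * β' b - β' b * α' (ι x) := by
    intro x b
    refine Algebra.adjoin_induction
      (p := fun b _ => α' (P (ι x) b) = α' (ι x) * β' b - β' b * α' (ι x))
      ?_ ?_ ?_ ?_ (hgenS b)
    · rintro _ ⟨y, rfl⟩; exact hb3 x y
    · intro r; simp [hPalg₂, hβ'alg]
    · intro s t _ _ hs ht
      simp only [map_add]
      rw [hs, ht]
      exact aux_add_right (α' (ι x)) (β' s) (β' t)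
    · intro s t _ _ hs ht
      rw [hder₂, map_add, map_mul, map_mul, hs, ht, hβ'der]
      exact aux_c3x_mul (α' (ι x)) (α' s) (α' t) (β' s) (β' t)
        (hcommα (ι x) s) (hcommα (ι x) t)
  -- compat₃ in general
  have C3 : ∀ a b : S, α' (P a b) = α' a * β' b - β' b * α' a := by
    intro a b
    refine Algebra.adjoin_induction
      (p := fun a _ => α' (P a b) = α' a * β' b - β' b * α' a)
      ?_ ?_ ?_ ?_ (hgenS a)
    · rintro _ ⟨x, rfl⟩; exact C3x x b
    · intro r
      simp [hPalg₁, Algebra.commutes]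
    · intro s t _ _ hs ht
      simp only [map_add, LinearMap.add_apply]
      rw [hs, ht]
      exact aux_add_left (α' s) (α' t) (β' b)
    · intro s t _ _ hs ht
      rw [hder₁, map_add, map_mul, map_mul, hs, ht, map_mul]
      have h2 := hcommα t (P s b)
      rw [hs] at h2
      exact aux_c3_mul (α' s) (α' t) (β' b) h2
  -- map_lie for a generator on the left
  have MLx : ∀ (x : g) (b : S), β' (P (ι x) b) = β' (ι x) * β' b - β' b * β' (ι x) := by
    intro x b
    have hBC : ∀ u : S, β' (ι x) * α' u
        = α' u * β' (ι x) + (α' (ι x) * β' u - β' u * α' (ι x)) := by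
      intro u
      have h := C3 u (ι x)
      rw [hPskew', map_neg, C3x] at h
      exact aux_flip _ _ _ h
    refine Algebra.adjoin_induction
      (p := fun b _ => β' (P (ι x) b) = β' (ι x) * β' b - β' b * β' (ι x))
      ?_ ?_ ?_ ?_ (hgenS b)
    · rintro _ ⟨y, rfl⟩; exact hbl x y
    · intro r; simp [hPalg₂, hβ'alg]
    · intro s t _ _ hs ht
      simp only [map_add]
      rw [hs, ht]
      exact aux_add_right (β' (ι x)) (β' s) (β' t)
    · intro s t _ _ hs ht
      rw [hder₂, map_add, hβ'der s (P (ι x) t), hβ'der t (P (ι x) s), hs, ht,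
        C3x x s, C3x x t, hβ'der s t]
      exact aux_mlx_mul (α' (ι x)) (β' (ι x)) (α' s) (α' t) (β' s) (β' t) (hBC s) (hBC t)
  -- map_lie in general
  have ML : ∀ a b : S, β' (P a b) = β' a * β' b - β' b * β' a := by
    intro a b
    refine Algebra.adjoin_induction
      (p := fun a _ => β' (P a b) = β' a * β' b - β' b * β' a)
      ?_ ?_ ?_ ?_ (hgenS a)
    · rintro _ ⟨x, rfl⟩; exact MLx x b
    · intro r; simp [hPalg₁, hβ'alg]
    · intro s t _ _ hs ht
      simp only [map_add, LinearMap.add_apply]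
      rw [hs, ht]
      exact aux_add_left (β' s) (β' t) (β' b)
    · intro s t _ _ hs ht
      rw [hder₁, map_add, hβ'der s (P t b), hβ'der t (P s b), hs, ht, C3 s b, C3 t b,
        hβ'der s t]
      exact aux_ml_mul (α' s) (α' t) (β' s) (β' t) (β' b)
  refine ⟨ML, C3, hβ'der, ?_⟩
  -- universal property
  intro U' _ _ α'' β'' h1 h2 h3
  have hβ''1 : β'' 1 = 0 := by
    have h := h3 1 1
    simp only [one_mul, map_one] at h
    exact (right_eq_add.mp h)
  have hβ''alg : ∀ r : R, β'' (algebraMap R S r) = 0 := by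
    intro r
    rw [Algebra.algebraMap_eq_smul_one, map_smul, hβ''1, smul_zero]
  have hcommα'' : ∀ s t : S, α'' s * α'' t = α'' t * α'' s := by
    intro s t; rw [← map_mul, ← map_mul, mul_comm]
  -- the linear map g⁺ → U'
  set f : g × g →ₗ[R] U' :=
    (α''.toLinearMap.comp ι).comp (LinearMap.fst R g g)
      + β''.comp (ι.comp (LinearMap.snd R g g)) with hfdef
  have hf : ∀ p : g × g, f p = α'' (ι p.1) + β'' (ι p.2) := fun p => rfl
  -- the lift preserves the Sridharan relation
  have hrel : ∀ ⦃a b : TensorAlgebra R (g × g)⦄, SridharanRel R g σ a b →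
      TensorAlgebra.lift R f a = TensorAlgebra.lift R f b := by
    rintro _ _ ⟨⟨y₁, z₁⟩, ⟨y₂, z₂⟩⟩
    simp only [map_sub, map_mul, TensorAlgebra.lift_ι_apply, AlgHom.commutes]
    have e1 : α'' (ι y₁) * β'' (ι z₂) - β'' (ι z₂) * α'' (ι y₁)
        = α'' (ι ⁅y₁, z₂⁆) + algebraMap R U' (σ y₁ z₂) := by
      rw [← h2, hgen, map_add, AlgHom.commutes]
    have e2 : α'' (ι y₂) * β'' (ι z₁) - β'' (ι z₁) * α'' (ι y₂)
        = α'' (ι ⁅y₂, z₁⁆) + algebraMap R U' (σ y₂ z₁) := by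
      rw [← h2, hgen, map_add, AlgHom.commutes]
    have e3 : β'' (ι z₁) * β'' (ι z₂) - β'' (ι z₂) * β'' (ι z₁) = β'' (ι ⁅z₁, z₂⁆) := by
      rw [← h1, hgen, map_add, hβ''alg, add_zero]
    have e4 : α'' (ι y₁) * α'' (ι y₂) - α'' (ι y₂) * α'' (ι y₁) = 0 := by
      rw [hcommα'', sub_self]
    rw [show doubleBracket g (y₁, z₁) (y₂, z₂) = (⁅y₁, z₂⁆ + ⁅z₁, y₂⁆, ⁅z₁, z₂⁆) from rfl,
      show doubleCocycle R g σ (y₁, z₁) (y₂, z₂) = σ y₁ z₂ + σ z₁ y₂ from rfl,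
      hf, hf, hf]
    rw [show (α'' (ι y₁) + β'' (ι z₁)) * (α'' (ι y₂) + β'' (ι z₂))
          - (α'' (ι y₂) + β'' (ι z₂)) * (α'' (ι y₁) + β'' (ι z₁))
        = (α'' (ι y₁) * α'' (ι y₂) - α'' (ι y₂) * α'' (ι y₁))
          + (α'' (ι y₁) * β'' (ι z₂) - β'' (ι z₂) * α'' (ι y₁))
          - (α'' (ι y₂) * β'' (ι z₁) - β'' (ι z₁) * α'' (ι y₂))
          + (β'' (ι z₁) * β'' (ι z₂) - β'' (ι z₂) * β'' (ι z₁)) by noncomm_ring,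
      e1, e2, e3, e4]
    rw [show (⁅y₁, z₂⁆ + ⁅z₁, y₂⁆ : g) = ⁅y₁, z₂⁆ - ⁅y₂, z₁⁆ by
        rw [← lie_skew y₂ z₁]; abel]
    rw [hσskew y₂ z₁]
    simp only [map_add, map_sub, map_neg]
    abel
  set γ : Sridharan R g σ →ₐ[R] U' :=
    RingQuot.liftAlgHom R ⟨TensorAlgebra.lift R f, hrel⟩ with hγdef
  have hγι : ∀ v : g × g, γ (sridharanι R g σ v) = f v := by
    intro v
    show γ (RingQuot.mkAlgHom R (SridharanRel R g σ) (TensorAlgebra.ι R v)) = f v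
    rw [hγdef, RingQuot.liftAlgHom_mkAlgHom_apply, TensorAlgebra.lift_ι_apply]
  have hγα : ∀ s : S, γ (α' s) = α'' s := by
    intro s
    refine Algebra.adjoin_induction (p := fun s _ => γ (α' s) = α'' s)
      ?_ ?_ ?_ ?_ (hgenS s)
    · rintro _ ⟨x, rfl⟩
      rw [hα' x, hγι, hf]
      simp
    · intro r; rw [AlgHom.commutes, AlgHom.commutes, AlgHom.commutes]
    · intro u v _ _ hu hv; rw [map_add, map_add, hu, hv, map_add]
    · intro u v _ _ hu hv; rw [map_mul, map_mul, hu, hv, map_mul]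
  have hγβ : ∀ s : S, γ (β' s) = β'' s := by
    intro s
    refine Algebra.adjoin_induction (p := fun s _ => γ (β' s) = β'' s)
      ?_ ?_ ?_ ?_ (hgenS s)
    · rintro _ ⟨x, rfl⟩
      rw [hβ' x, hγι, hf]
      simp [map_zero]
    · intro r; rw [hβ'alg, map_zero, hβ''alg]
    · intro u v _ _ hu hv; rw [map_add, map_add, hu, hv, map_add]
    · intro u v _ _ hu hv
      rw [hβ'der, map_add, map_mul, map_mul, hu, hv, hγα, hγα, h3]
  refine ⟨γ, ⟨hγα, hγβ⟩, ?_⟩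
  rintro γ₂ ⟨hγ₂α, hγ₂β⟩
  refine RingQuot.ringQuot_ext' R γ₂ γ (TensorAlgebra.hom_ext (LinearMap.ext fun v => ?_))
  have key : ∀ (δ : Sridharan R g σ →ₐ[R] U'),
      (∀ a : S, δ (α' a) = α'' a) → (∀ a : S, δ (β' a) = β'' a) →
      δ (sridharanι R g σ v) = α'' (ι v.1) + β'' (ι v.2) := by
    intro δ hδα hδβ
    have hv : sridharanι R g σ v = α' (ι v.1) + β' (ι v.2) := by
      rw [hα', hβ', ← map_add]
      congr 1
      simp
    rw [hv, map_add, hδα, hδβ]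
  show γ₂ (RingQuot.mkAlgHom R (SridharanRel R g σ) (TensorAlgebra.ι R v))
      = γ (RingQuot.mkAlgHom R (SridharanRel R g σ) (TensorAlgebra.ι R v))
  rw [show RingQuot.mkAlgHom R (SridharanRel R g σ) (TensorAlgebra.ι R v)
      = sridharanι R g σ v from rfl]
  rw [key γ₂ hγ₂α hγ₂β, key γ hγα hγβ]
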